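/- For M = [[1,1],[1,1]] and the path q̄(λ) = (1−λ)·(−4,0) + λ·(0,−4): for λ = 1/2 the solution set of f_M(x) = q̄(λ) contains the continuum {(μ, −2−μ) : μ ∈ [−2,0]}, while for each λ ∈ [0,1/2) ∪ (1/2,1] the restriction of f_M(x) = q̄(λ) to the orthant pos C_I({1,2}) (i.e., x ≤ 0) has no solution. -/
import Mathlib


open Matrix

/-- Complementary matrix `C_M(α)`: j-th column is `-M_{·j}` if `j ∈ α`, else `e_j`. -/
def compMat {n : ℕ} (M : Matrix (Fin n) (Fin n) ℝ) (α : Finset (Fin n)) :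
    Matrix (Fin n) (Fin n) ℝ :=
  fun i j => if j ∈ α then -M i j else (if i = j then 1 else 0)

/-- The orthant `pos C_I(α)`: `x_j ≤ 0` for `j ∈ α`, `x_j ≥ 0` otherwise. -/
def orthant {n : ℕ} (α : Finset (Fin n)) : Set (Fin n → ℝ) :=
  {x | ∀ j, if j ∈ α then x j ≤ 0 else 0 ≤ x j}

/-- The cone generated by the columns of `A`. -/
def posCone {n : ℕ} (A : Matrix (Fin n) (Fin n) ℝ) : Set (Fin n → ℝ) :=
  {q | ∃ p : Fin n → ℝ, (∀ j, 0 ≤ p j) ∧ q = A.mulVec p}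

/-- The piecewise linear map `f_M`, in closed form: on the orthant
`pos C_I(α)` this map equals `x ↦ C_{-M}(α) x`. -/
def fpl {n : ℕ} (M : Matrix (Fin n) (Fin n) ℝ) (x : Fin n → ℝ) : Fin n → ℝ :=
  fun i => max (x i) 0 - M.mulVec (fun j => max (-x j) 0) i

/-- `z` solves the LCP `(M, q)`: with `w = Mz + q`, one has `z ≥ 0`, `w ≥ 0`, `wᵀz = 0`. -/
def isLCPsol {ι : Type*} [Fintype ι] (M : Matrix ι ι ℝ) (q z : ι → ℝ) : Prop :=
  (∀ i, 0 ≤ z i) ∧ (∀ i, 0 ≤ (M.mulVec z + q) i) ∧ (∀ i, (M.mulVec z + q) i * z i = 0)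

theorem stmt_10 :
    (∀ μ ∈ Set.Icc (-2:ℝ) 0,
      fpl !![1, 1; 1, 1] ![μ, -2 - μ] = ![4*(1/2 : ℝ) - 4, -4*(1/2 : ℝ)]) ∧
    (∀ l : ℝ, l ∈ Set.Ico (0:ℝ) (1/2) ∪ Set.Ioc (1/2 : ℝ) 1 →
      ¬ ∃ x : Fin 2 → ℝ, (∀ i, x i ≤ 0) ∧
        (!![1, 1; 1, 1] : Matrix (Fin 2) (Fin 2) ℝ).mulVec x = ![4*l - 4, -4*l]) := by
  constructor
  · rintro μ ⟨h1, h2⟩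
    funext i
    have e1 : max μ 0 = 0 := max_eq_right h2
    have e2 : max (-2 - μ) 0 = 0 := max_eq_right (by linarith)
    have e3 : max (-μ) 0 = -μ := max_eq_left (by linarith)
    have e4 : max (μ + 2) 0 = μ + 2 := max_eq_left (by linarith)
    fin_cases i <;>
      simp [fpl, Matrix.mulVec, dotProduct, Fin.sum_univ_two, e1, e2, e3, e4] <;> linarith
  · rintro l hl ⟨x, hx, heq⟩
    have h0 := congrFun heq 0
    have h1 := congrFun heq 1
    simp [Matrix.mulVec, dotProduct, Fin.sum_univ_two] at h0 h1
    have : l = 1/2 := by linarith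
    rcases hl with ⟨_, h⟩ | ⟨h, _⟩ <;> simp [this] at h
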